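/- Let ξ be a complex non-real algebraic number, n a positive integer, and suppose t_n(ξ) = (n+2)/2 with μ₀ ∈ ℂ* attaining dim V_n(μ₀,ξ) = (n+2)/2, where n is even and deg ξ > n. Let U₀ ⊂ ℚ^{n+1} correspond to V_n(μ₀,ξ). Then the linear forms M(x) = Σ_{i=0}^n ξ^i x_i and M'(x) = Σ_{i=1}^n i·ξ^{i−1} x_i are linearly independent over ℂ on U₀. -/
import Mathlib


open Polynomial

/-- The ℚ-vector space of polynomials `f ∈ ℚ[X]` of degree at most `n`
with `μ * f(ξ) ∈ ℝ`. -/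
noncomputable def Vspace (n : ℕ) (μ ξ : ℂ) : Submodule ℚ ℚ[X] where
  carrier := {f | f.natDegree ≤ n ∧ ∃ r : ℝ, μ * aeval ξ f = (r : ℂ)}
  zero_mem' := ⟨by simp, 0, by simp⟩
  add_mem' := by
    rintro f g ⟨hf, r, hr⟩ ⟨hg, s, hs⟩
    refine ⟨(natDegree_add_le f g).trans (by simp [hf, hg]), r + s, ?_⟩
    push_cast
    rw [map_add, mul_add, hr, hs]
  smul_mem' := by
    rintro c f ⟨hf, r, hr⟩
    refine ⟨(natDegree_smul_le c f).trans hf, c * r, ?_⟩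
    rw [map_smul, Algebra.mul_smul_comm, hr, Rat.smul_def]
    push_cast
    ring

/-- `t_n(ξ)`: the maximum over nonzero `μ ∈ ℂ` of `dim_ℚ V_n(μ,ξ)`. -/
noncomputable def tdeg (n : ℕ) (ξ : ℂ) : ℕ :=
  sSup {d : ℕ | ∃ μ : ℂ, μ ≠ 0 ∧ d = Module.finrank ℚ (Vspace n μ ξ)}

lemma exists_pair_distinct_degree (W : Submodule ℚ ℚ[X]) [FiniteDimensional ℚ W]
    (h2 : 2 ≤ Module.finrank ℚ W) :
    ∃ f g : ℚ[X], f ∈ W ∧ g ∈ W ∧ f ≠ 0 ∧ g ≠ 0 ∧ f.natDegree < g.natDegree := by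
  classical
  have hWbot : W ≠ ⊥ := by
    intro h
    rw [h, finrank_bot] at h2
    omega
  obtain ⟨p0, hp0W, hp0⟩ := (Submodule.ne_bot_iff W).1 hWbot
  have hP : ∃ d : ℕ, ∃ p : ℚ[X], p ∈ W ∧ p ≠ 0 ∧ p.natDegree = d := ⟨_, p0, hp0W, hp0, rfl⟩
  obtain ⟨f, hfW, hf0, hfd⟩ := Nat.find_spec hP
  set d := Nat.find hP with hd
  have hmin : ∀ q : ℚ[X], q ∈ W → q ≠ 0 → d ≤ q.natDegree := fun q hqW hq0 =>
    Nat.find_min' hP ⟨q, hqW, hq0, rfl⟩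
  have hnle : ¬ W ≤ Submodule.span ℚ {f} := by
    intro hle
    have := Submodule.finrank_mono (R := ℚ) (M := ℚ[X]) hle
    rw [finrank_span_singleton hf0] at this
    omega
  obtain ⟨g, hgW, hgs⟩ := SetLike.not_le_iff_exists.1 hnle
  have hg0 : g ≠ 0 := by rintro rfl; exact hgs (Submodule.zero_mem _)
  have hge : d ≤ g.natDegree := hmin g hgW hg0
  rcases lt_or_eq_of_le hge with hlt | heq
  · exact ⟨f, g, hfW, hgW, hf0, hg0, hfd ▸ hlt⟩
  · exfalso
    set w : ℚ[X] := f.leadingCoeff • g - g.leadingCoeff • f with hw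
    have hwW : w ∈ W :=
      Submodule.sub_mem _ (Submodule.smul_mem _ _ hgW) (Submodule.smul_mem _ _ hfW)
    have hw0 : w ≠ 0 := by
      intro h0
      apply hgs
      rw [hw, sub_eq_zero] at h0
      have hfl : f.leadingCoeff ≠ 0 := leadingCoeff_ne_zero.2 hf0
      have hgeq : g = (f.leadingCoeff)⁻¹ • (g.leadingCoeff • f) := by
        rw [← h0, smul_smul, inv_mul_cancel₀ hfl, one_smul]
      rw [hgeq, smul_smul]
      exact Submodule.smul_mem _ _ (Submodule.mem_span_singleton_self f)
    have hwle : w.natDegree ≤ d := by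
      apply (natDegree_sub_le _ _).trans
      simp only [max_le_iff]
      exact ⟨(natDegree_smul_le _ _).trans (le_of_eq heq.symm),
        (natDegree_smul_le _ _).trans (le_of_eq hfd)⟩
    have hwc : w.coeff d = 0 := by
      rw [hw]
      simp only [coeff_sub, coeff_smul, smul_eq_mul]
      rw [show g.coeff d = g.leadingCoeff by rw [leadingCoeff, ← heq],
        show f.coeff d = f.leadingCoeff by rw [leadingCoeff, hfd]]
      ring
    have hwlt : w.natDegree < d :=
      lt_of_le_of_ne hwle (fun h => (leadingCoeff_ne_zero.2 hw0)
        (by rw [leadingCoeff, h]; exact hwc))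
    exact Nat.lt_irrefl d (lt_of_le_of_lt (hmin w hwW hw0) hwlt)

theorem M_and_M'_independent_on_U0 (n : ℕ) (hn : 0 < n) (hne : Even n) (ξ : ℂ)
    (hξreal : ξ.im ≠ 0) (hξalg : IsAlgebraic ℚ ξ)
    (hdeg : n < (minpoly ℚ ξ).natDegree)
    (μ₀ : ℂ) (hμ₀ : μ₀ ≠ 0)
    (hmax : Module.finrank ℚ (Vspace n μ₀ ξ) = tdeg n ξ)
    (ht : 2 * tdeg n ξ = n + 2) :
    ∀ a b : ℂ,
      (∀ x : Fin (n + 1) → ℚ,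
        (∃ r : ℝ, μ₀ * (∑ i : Fin (n + 1), ξ ^ (i : ℕ) * (x i : ℂ)) = (r : ℂ)) →
        a * (∑ i : Fin (n + 1), ξ ^ (i : ℕ) * (x i : ℂ))
          + b * (∑ i : Fin (n + 1), (i : ℕ) * ξ ^ ((i : ℕ) - 1) * (x i : ℂ)) = 0) →
      a = 0 ∧ b = 0 := by
  intro a b hyp
  classical
  obtain ⟨m0, hm0⟩ := hne
  have hm1 : 1 ≤ m0 := by omega
  -- ξ is not a root of any nonzero rational polynomial of degree ≤ n
  have haeval : ∀ q : ℚ[X], q ≠ 0 → q.natDegree ≤ n → aeval ξ q ≠ 0 := by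
    intro q hq0 hqn h
    have hdvd : minpoly ℚ ξ ∣ q := minpoly.dvd ℚ ξ h
    have := natDegree_le_of_dvd hdvd hq0
    omega
  -- sums as polynomial evaluations
  have sum_eval : ∀ f : ℚ[X], f.natDegree ≤ n →
      (∑ i : Fin (n + 1), ξ ^ (i : ℕ) * ((f.coeff i : ℚ) : ℂ)) = aeval ξ f := by
    intro f hf
    rw [aeval_eq_sum_range' (Nat.lt_succ_of_le hf), ← Fin.sum_univ_eq_sum_range]
    apply Finset.sum_congr rfl
    intro i _
    rw [Rat.smul_def, mul_comm]
  have sum_deriv : ∀ f : ℚ[X], f.natDegree ≤ n →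
      (∑ i : Fin (n + 1), ((i : ℕ) : ℂ) * ξ ^ ((i : ℕ) - 1) * ((f.coeff i : ℚ) : ℂ))
        = aeval ξ (derivative f) := by
    intro f hf
    have hderiv : (derivative f).natDegree < n + 1 :=
      Nat.lt_succ_of_le ((natDegree_derivative_le f).trans (by omega))
    rw [aeval_eq_sum_range' hderiv,
      Fin.sum_univ_eq_sum_range (fun i => ((i : ℕ) : ℂ) * ξ ^ (i - 1) * ((f.coeff i : ℚ) : ℂ)) (n + 1)]
    rw [Finset.sum_range_succ' (fun i => ((i : ℕ) : ℂ) * ξ ^ (i - 1) * ((f.coeff i : ℚ) : ℂ)) n,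
      Finset.sum_range_succ]
    have hlast : f.coeff (n + 1) = 0 := coeff_eq_zero_of_natDegree_lt (by omega)
    rw [show (derivative f).coeff n = f.coeff (n + 1) * (n + 1) from coeff_derivative f n, hlast]
    simp only [Nat.cast_zero, zero_mul, add_zero, zero_smul, mul_zero]
    apply Finset.sum_congr rfl
    intro i _
    rw [coeff_derivative, Rat.smul_def]
    push_cast
    ring
  -- the key relation on Vspace
  have key : ∀ f : ℚ[X], f ∈ Vspace n μ₀ ξ →
      a * aeval ξ f + b * aeval ξ (derivative f) = 0 := by
    rintro f ⟨hfn, r, hr⟩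
    have := hyp (fun i => f.coeff i) ⟨r, by rw [sum_eval f hfn]; exact hr⟩
    rwa [sum_eval f hfn, sum_deriv f hfn] at this
  -- dimension counting
  set V := Vspace n μ₀ ξ with hV
  set B := degreeLT ℚ (m0 + 2) with hB
  set D := degreeLT ℚ (n + 1) with hD
  have hVD : V ≤ D := by
    rintro f ⟨hfn, -⟩
    rw [hD, mem_degreeLT]
    calc degree f ≤ f.natDegree := degree_le_natDegree
    _ < ((n + 1 : ℕ) : WithBot ℕ) := by exact_mod_cast Nat.lt_succ_of_le hfn
  have hBD : B ≤ D := degreeLT_mono (by omega)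
  have instD : FiniteDimensional ℚ D := by
    rw [hD]
    exact Module.Finite.equiv (degreeLTEquiv ℚ (n + 1)).symm
  have instV : FiniteDimensional ℚ V := Submodule.finiteDimensional_of_le hVD
  have instB : FiniteDimensional ℚ B := Submodule.finiteDimensional_of_le hBD
  have hfinD : Module.finrank ℚ D = n + 1 := by
    rw [hD, (degreeLTEquiv ℚ (n + 1)).finrank_eq, Module.finrank_fin_fun]
  have hfinB : Module.finrank ℚ B = m0 + 2 := by
    rw [hB, (degreeLTEquiv ℚ (m0 + 2)).finrank_eq, Module.finrank_fin_fun]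
  have hfinV : 2 * Module.finrank ℚ V = n + 2 := by rw [hV, hmax]; exact ht
  have hsup : Module.finrank ℚ (V ⊔ B : Submodule ℚ ℚ[X]) ≤ n + 1 := by
    rw [← hfinD]
    exact Submodule.finrank_mono (sup_le hVD hBD)
  have hsupinf := Submodule.finrank_sup_add_finrank_inf_eq V B
  have hinf : 2 ≤ Module.finrank ℚ (V ⊓ B : Submodule ℚ ℚ[X]) := by omega
  obtain ⟨f, g, hfW, hgW, hf0, hg0, hfg⟩ := exists_pair_distinct_degree (V ⊓ B) hinf
  obtain ⟨hfV, hfB⟩ := hfW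
  obtain ⟨hgV, hgB⟩ := hgW
  have hgdeg : g.natDegree ≤ m0 + 1 := by
    have := mem_degreeLT.1 hgB
    rw [← natDegree_lt_iff_degree_lt hg0] at this
    omega
  have hfdeg : f.natDegree ≤ m0 := by omega
  -- the Wronskian
  set p : ℚ[X] := f * derivative g - derivative f * g with hp
  have hpdeg : p.natDegree ≤ n := by
    apply (natDegree_sub_le _ _).trans
    simp only [max_le_iff]
    constructor
    · exact (natDegree_mul_le).trans (by
        have := natDegree_derivative_le g
        omega)
    · exact (natDegree_mul_le).trans (by
        have := natDegree_derivative_le f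
        omega)
  have hgd1 : 1 ≤ g.natDegree := by omega
  have hg' : derivative g ≠ 0 := by
    intro h
    have := natDegree_eq_zero_of_derivative_eq_zero h
    omega
  have hp0 : p ≠ 0 := by
    rcases Nat.eq_zero_or_pos f.natDegree with hdf0 | hdf1
    · have hf' : derivative f = 0 := by
        rw [eq_C_of_natDegree_eq_zero hdf0, derivative_C]
      rw [hp, hf', zero_mul, sub_zero]
      exact mul_ne_zero hf0 hg'
    · -- leading coefficient computation
      intro hp0
      have hcoeff : p.coeff (f.natDegree + (g.natDegree - 1)) = 0 := by rw [hp0, coeff_zero]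
      set df := f.natDegree with hdf
      set dg := g.natDegree with hdg
      have hf'nd : (derivative f).natDegree = df - 1 := by
        apply le_antisymm (natDegree_derivative_le f)
        apply le_natDegree_of_ne_zero
        rw [coeff_derivative, show (df - 1) + 1 = df by omega]
        exact mul_ne_zero (leadingCoeff_ne_zero.2 hf0) (by positivity)
      have hg'nd : (derivative g).natDegree = dg - 1 := by
        apply le_antisymm (natDegree_derivative_le g)
        apply le_natDegree_of_ne_zero
        rw [coeff_derivative, show (dg - 1) + 1 = dg by omega]
        exact mul_ne_zero (leadingCoeff_ne_zero.2 hg0) (by positivity)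
      have h1 : (f * derivative g).coeff (df + (dg - 1)) =
          f.leadingCoeff * (g.leadingCoeff * ((dg - 1 : ℕ) + 1 : ℚ)) := by
        have := coeff_mul_degree_add_degree f (derivative g)
        rw [hg'nd] at this
        rw [this]
        congr 1
        rw [leadingCoeff, hg'nd, coeff_derivative, show (dg - 1) + 1 = dg by omega]
        rfl
      have h2 : (derivative f * g).coeff (df + (dg - 1)) =
          (f.leadingCoeff * ((df - 1 : ℕ) + 1 : ℚ)) * g.leadingCoeff := by
        have := coeff_mul_degree_add_degree (derivative f) g
        rw [hf'nd] at this
        rw [show df + (dg - 1) = (df - 1) + dg by omega, this]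
        congr 1
        rw [leadingCoeff, hf'nd, coeff_derivative, show (df - 1) + 1 = df by omega]
        rfl
      rw [hp, coeff_sub, h1, h2] at hcoeff
      have hfl : f.leadingCoeff ≠ 0 := leadingCoeff_ne_zero.2 hf0
      have hgl : g.leadingCoeff ≠ 0 := leadingCoeff_ne_zero.2 hg0
      have hne : (((dg - 1 : ℕ) : ℚ) + 1) - (((df - 1 : ℕ) : ℚ) + 1) ≠ 0 := by
        intro h
        have h' : ((dg - 1 : ℕ) : ℚ) = ((df - 1 : ℕ) : ℚ) := by linarith
        have h'' : dg - 1 = df - 1 := by exact_mod_cast h'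
        omega
      have h3 : f.leadingCoeff * g.leadingCoeff *
          ((((dg - 1 : ℕ) : ℚ) + 1) - (((df - 1 : ℕ) : ℚ) + 1)) = 0 := by
        linear_combination hcoeff
      rcases mul_eq_zero.1 h3 with h | h
      · exact absurd h (mul_ne_zero hfl hgl)
      · exact hne h
  have hbp : b * aeval ξ p = 0 := by
    have e1 := key f hfV
    have e2 := key g hgV
    rw [hp, map_sub, map_mul, map_mul]
    linear_combination (aeval ξ f) * e2 - (aeval ξ g) * e1
  have hb : b = 0 := by
    rcases mul_eq_zero.1 hbp with h | h
    · exact h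
    · exact absurd h (haeval p hp0 hpdeg)
  have ha : a = 0 := by
    have e1 := key f hfV
    rw [hb, zero_mul, add_zero] at e1
    rcases mul_eq_zero.1 e1 with h | h
    · exact h
    · exact absurd h (haeval f hf0 (by omega))
  exact ⟨ha, hb⟩
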